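/- Work on a filtered probability space as follows: fix constants 0 ≤ x_min < x_max, a constant ε > 0, a finite action set A with A* ⊊ A nonempty, and the Roth–Erev process with attractions f_{a,0} > 0, V_t := Σ_{a∈A} f_{a,t}, action a_{t+1} chosen with ℙ_t(a_{t+1} = b) = f_{b,t}/V_t conditionally independently of the payoffs (x_{t+1}(b))_{b∈A} ∈ [x_min, x_max]^A, and f_{b,t+1} = f_{b,t} + 1_{{a_{t+1} = b}}·x_{t+1}(b). Assume E_t[ x_{t+1}(a) − x_{t+1}(b) ] ≥ ε almost surely for all a ∈ A*, b ∈ A∖A*, t ∈ ℕ₀, and V₀ > max( 2·x_max²/ε, x_max ). Then the process P_t := Σ_{a∈A*} f_{a,t}/V_t satisfies, for every t ∈ ℕ₀, E_t[P_{t+1}] − P_t ≥ ( ε / ( 2·( V₀ + (t+1)·x_max ) ) ) · P_t·(1 − P_t) almost surely. -/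

import Mathlib

open MeasureTheory ProbabilityTheory Filter Set
open scoped ENNReal NNReal

lemma condexp_indicator_mul_of_condIndepFun
    {Ω : Type*} {m : MeasurableSpace Ω} {mΩ : MeasurableSpace Ω} [StandardBorelSpace Ω]
    [Nonempty Ω] {μ : Measure Ω} [IsProbabilityMeasure μ] (hm : m ≤ mΩ)
    {β γ : Type*} [MeasurableSpace β] [MeasurableSpace γ]
    {F : Ω → β} {G : Ω → γ} (hF : Measurable F) (hG : Measurable G)
    (hind : CondIndepFun m hm F G μ)
    {s : Set β} (hs : MeasurableSet s)
    {φ : γ → ℝ} (hφ : Measurable φ) (hint : Integrable (fun ω => φ (G ω)) μ) :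
    μ[fun ω => (F ⁻¹' s).indicator (fun _ => (1:ℝ)) ω * φ (G ω)|m]
      =ᵐ[μ] μ[(F ⁻¹' s).indicator (fun _ => (1:ℝ))|m] * μ[fun ω => φ (G ω)|m] := by
  have hsig : SigmaFinite (μ.trim hm) := by
    have : IsFiniteMeasure (μ.trim hm) := isFiniteMeasure_trim hm
    infer_instance
  set A : Set Ω := F ⁻¹' s with hA
  have hAmeas : MeasurableSet A := hF hs
  set ψ : Ω → ℝ := fun ω => φ (G ω) with hψdef
  have hψmeas : Measurable ψ := hφ.comp hG
  set W : Ω → ℝ := μ[A.indicator (fun _ => (1:ℝ))|m] with hW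
  have hWsm : StronglyMeasurable[m] W := stronglyMeasurable_condExp
  have hWm : Measurable W := (hWsm.mono hm).measurable
  have hIndInt : Integrable (A.indicator (fun _ => (1:ℝ))) μ :=
    (integrable_const (1:ℝ)).indicator hAmeas
  have hW0 : 0 ≤ᵐ[μ] W := condExp_nonneg
    (Eventually.of_forall fun ω => Set.indicator_nonneg (fun _ _ => zero_le_one) ω)
  have hW1 : ∀ᵐ ω ∂μ, W ω ≤ 1 := by
    have h2 := condExp_mono (μ := μ) (m := m) hIndInt (integrable_const (1:ℝ))
      (Eventually.of_forall fun ω => Set.indicator_le_self' (fun _ _ => zero_le_one) ω)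
    rw [condExp_const hm] at h2
    exact h2
  have hWbd : ∀ᵐ ω ∂μ, ‖W ω‖ ≤ 1 := by
    filter_upwards [hW0, hW1] with ω h0 h1
    have h0' : (0:ℝ) ≤ W ω := h0
    rw [Real.norm_eq_abs, abs_le]
    exact ⟨by linarith, h1⟩
  have hmGle : MeasurableSpace.comap G ‹MeasurableSpace γ› ≤ mΩ := hG.comap_le
  have hψmG : StronglyMeasurable[MeasurableSpace.comap G ‹MeasurableSpace γ›] ψ :=
    Measurable.stronglyMeasurable (fun t ht => ⟨φ ⁻¹' t, hφ ht, rfl⟩)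
  -- Step A
  have hstepA : ∀ t : Set γ, MeasurableSet t →
      (μ⟦A ∩ G ⁻¹' t | m⟧) =ᵐ[μ] W * (μ⟦G ⁻¹' t | m⟧) :=
    fun t ht => (condIndepFun_iff (m' := m) (hm' := hm) F G hF hG μ).mp hind A (G ⁻¹' t)
      ⟨s, hs, rfl⟩ ⟨t, ht, rfl⟩
  -- integrated form of Step A
  have hkey : ∀ u : Set Ω, MeasurableSet[m] u → ∀ t : Set γ, MeasurableSet t →
      (μ ((A ∩ G ⁻¹' t) ∩ u)).toReal = ∫ ω in u ∩ G ⁻¹' t, W ω ∂μ := by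
    intro u hum t ht
    have hu : MeasurableSet u := hm _ hum
    have htm : MeasurableSet (G ⁻¹' t) := hG ht
    have hintAB : Integrable ((A ∩ G ⁻¹' t).indicator (fun _ => (1:ℝ))) μ :=
      (integrable_const (1:ℝ)).indicator (hAmeas.inter htm)
    have h1 : ∫ ω in u, (μ⟦A ∩ G ⁻¹' t | m⟧) ω ∂μ = (μ ((A ∩ G ⁻¹' t) ∩ u)).toReal := by
      rw [setIntegral_condExp hm hintAB hum, setIntegral_indicator (hAmeas.inter htm)]
      simp [Set.inter_comm u]
      rfl
    have hIndtInt : Integrable ((G ⁻¹' t).indicator (fun _ => (1:ℝ))) μ :=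
      (integrable_const (1:ℝ)).indicator htm
    have hWind_int : Integrable (fun ω => W ω * (G ⁻¹' t).indicator (fun _ => (1:ℝ)) ω) μ :=
      Integrable.bdd_mul hIndtInt hWm.aestronglyMeasurable hWbd
    have hpull : μ[fun ω => W ω * (G ⁻¹' t).indicator (fun _ => (1:ℝ)) ω|m]
        =ᵐ[μ] W * (μ⟦G ⁻¹' t | m⟧) :=
      condExp_stronglyMeasurable_mul_of_bound hm hWsm hIndtInt 1 hWbd
    have h2 : ∫ ω in u, (μ⟦A ∩ G ⁻¹' t | m⟧) ω ∂μ
        = ∫ ω in u, W ω * (G ⁻¹' t).indicator (fun _ => (1:ℝ)) ω ∂μ := by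
      rw [setIntegral_congr_ae (hm _ hum) ((hstepA t ht).mono fun ω h _ => h)]
      rw [← setIntegral_congr_ae (hm _ hum) (hpull.mono fun ω h _ => h)]
      rw [setIntegral_condExp hm hWind_int hum]
    have h3 : ∫ ω in u, W ω * (G ⁻¹' t).indicator (fun _ => (1:ℝ)) ω ∂μ
        = ∫ ω in u ∩ G ⁻¹' t, W ω ∂μ := by
      rw [← setIntegral_indicator htm]
      congr 1
      ext ω
      by_cases hω : ω ∈ G ⁻¹' t <;> simp [hω]
    rw [← h1, h2, h3]
  -- the two densities give the same measure on σ(G)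
  have hstar : ∀ u : Set Ω, MeasurableSet[m] u →
      ∫ ω in u, A.indicator (fun _ => (1:ℝ)) ω * ψ ω ∂μ = ∫ ω in u, W ω * ψ ω ∂μ := by
    intro u hum
    have hu : MeasurableSet u := hm _ hum
    set ν₁ : Measure Ω := μ.restrict (A ∩ u) with hν₁
    set ν₂ : Measure Ω := (μ.restrict u).withDensity (fun ω => ((W ω).toNNReal : ℝ≥0∞))
      with hν₂
    have hofReal : (fun ω => ((W ω).toNNReal : ℝ≥0∞)) = fun ω => ENNReal.ofReal (W ω) := rfl
    have hC : ∀ t : Set γ, MeasurableSet t → ν₁ (G ⁻¹' t) = ν₂ (G ⁻¹' t) := by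
      intro t ht
      have htm : MeasurableSet (G ⁻¹' t) := hG ht
      have e1 : ν₁ (G ⁻¹' t) = μ ((A ∩ G ⁻¹' t) ∩ u) := by
        rw [hν₁, Measure.restrict_apply htm]
        congr 1
        ext ω; simp; tauto
      have e2 : ν₂ (G ⁻¹' t) = ENNReal.ofReal (∫ ω in u ∩ G ⁻¹' t, W ω ∂μ) := by
        rw [hν₂, hofReal]
        rw [withDensity_apply _ htm, Measure.restrict_restrict htm,
          Set.inter_comm (G ⁻¹' t) u]
        rw [← ofReal_integral_eq_lintegral_ofReal
          (integrable_condExp.integrableOn) (ae_restrict_of_ae hW0)]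
      rw [e1, e2, ← hkey u hum t ht, ENNReal.ofReal_toReal (measure_ne_top μ _)]
    have htrim : ν₁.trim hmGle = ν₂.trim hmGle := by
      refine @Measure.ext Ω (MeasurableSpace.comap G ‹MeasurableSpace γ›) _ _ (fun v hv => ?_)
      obtain ⟨t, ht, rfl⟩ := hv
      rw [trim_measurableSet_eq hmGle ⟨t, ht, rfl⟩, trim_measurableSet_eq hmGle ⟨t, ht, rfl⟩]
      exact hC t ht
    have hints : ∫ ω, ψ ω ∂ν₁ = ∫ ω, ψ ω ∂ν₂ := by
      rw [integral_trim hmGle hψmG, htrim, ← integral_trim hmGle hψmG]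
    have e3 : ∫ ω, ψ ω ∂ν₁ = ∫ ω in u, A.indicator (fun _ => (1:ℝ)) ω * ψ ω ∂μ := by
      calc ∫ ω, ψ ω ∂ν₁ = ∫ ω in u ∩ A, ψ ω ∂μ := by rw [hν₁, Set.inter_comm A u]
        _ = ∫ ω in u, A.indicator ψ ω ∂μ := (setIntegral_indicator hAmeas).symm
        _ = ∫ ω in u, A.indicator (fun _ => (1:ℝ)) ω * ψ ω ∂μ :=
            integral_congr_ae (Eventually.of_forall fun ω => by
              by_cases hω : ω ∈ A <;> simp [hω])
    have e4 : ∫ ω, ψ ω ∂ν₂ = ∫ ω in u, W ω * ψ ω ∂μ := by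
      calc ∫ ω, ψ ω ∂ν₂ = ∫ ω in u, (W ω).toNNReal • ψ ω ∂μ :=
            integral_withDensity_eq_integral_smul
              (f := fun ω => (W ω).toNNReal) (measurable_real_toNNReal.comp hWm) ψ
        _ = ∫ ω in u, W ω * ψ ω ∂μ := by
            refine integral_congr_ae (ae_restrict_of_ae ?_)
            filter_upwards [hW0] with ω h0
            simp [NNReal.smul_def, Real.coe_toNNReal _ h0]
    rw [← e3, ← e4, hints]
  -- conclude via uniqueness of conditional expectation
  have hprod_int : Integrable (fun ω => A.indicator (fun _ => (1:ℝ)) ω * ψ ω) μ :=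
    Integrable.bdd_mul (c := 1) hint
      ((measurable_const.indicator hAmeas).aestronglyMeasurable)
      (Eventually.of_forall fun ω => by
        by_cases hω : ω ∈ A <;> simp [hω])
  have hWψ_int : Integrable (fun ω => W ω * ψ ω) μ :=
    Integrable.bdd_mul hint hWm.aestronglyMeasurable hWbd
  have hfinal : (fun ω => W ω * (μ[ψ|m]) ω)
      =ᵐ[μ] μ[fun ω => A.indicator (fun _ => (1:ℝ)) ω * ψ ω|m] := by
    refine ae_eq_condExp_of_forall_setIntegral_eq hm hprod_int ?_ ?_ ?_
    · intro u hum _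
      exact (Integrable.bdd_mul integrable_condExp hWm.aestronglyMeasurable hWbd).integrableOn
    · intro u hum _
      have hpull : μ[fun ω => W ω * ψ ω|m] =ᵐ[μ] fun ω => W ω * (μ[ψ|m]) ω :=
        condExp_stronglyMeasurable_mul_of_bound hm hWsm hint 1 hWbd
      rw [← setIntegral_congr_ae (hm _ hum) (hpull.mono fun ω h _ => h),
        setIntegral_condExp hm hWψ_int hum]
      exact (hstar u hum).symm
    · exact StronglyMeasurable.aestronglyMeasurable
        (hWsm.mul stronglyMeasurable_condExp)
  filter_upwards [hfinal] with ω h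
  exact h.symm

lemma key_ineq {A : Type*} [Fintype A] [DecidableEq A] (Astar : Finset A)
    (q mv : A → ℝ) (ε xmax V Vcap : ℝ)
    (hq0 : ∀ b, 0 ≤ q b) (hqsum : ∑ b, q b = 1)
    (hmv0 : ∀ b, 0 ≤ mv b) (hmv1 : ∀ b, mv b ≤ xmax)
    (hgap : ∀ a ∈ Astar, ∀ b ∉ Astar, ε ≤ mv a - mv b)
    (hε : 0 < ε) (hxmax : 0 < xmax)
    (hV1 : 2 * xmax ^ 2 / ε < V) (hVx : xmax < V) (hVcap : V + xmax ≤ Vcap) :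
    ε / (2 * Vcap) * ((∑ a ∈ Astar, q a) * (1 - ∑ a ∈ Astar, q a))
      ≤ ∑ b, (if b ∈ Astar then (1 - ∑ a ∈ Astar, q a) / (V + xmax)
          else -((∑ a ∈ Astar, q a) / V)) * (q b * mv b) := by
  set P : ℝ := ∑ a ∈ Astar, q a with hP
  set Q : ℝ := 1 - P with hQ
  set SA : ℝ := ∑ a ∈ Astar, q a * mv a with hSA
  set SB : ℝ := ∑ b ∈ Astarᶜ, q b * mv b with hSB
  have hV0 : 0 < V := lt_trans hxmax hVx
  have hD : 0 < V + xmax := by linarith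
  have hVcap0 : 0 < Vcap := by linarith
  have hP0 : 0 ≤ P := Finset.sum_nonneg fun a _ => hq0 a
  have hQeq : Q = ∑ b ∈ Astarᶜ, q b := by
    have := Finset.sum_add_sum_compl Astar q
    rw [hqsum] at this
    rw [hQ]; linarith
  have hQ0 : 0 ≤ Q := hQeq ▸ Finset.sum_nonneg fun a _ => hq0 a
  have hSA0 : 0 ≤ SA := Finset.sum_nonneg fun a _ => mul_nonneg (hq0 a) (hmv0 a)
  have hSB0 : 0 ≤ SB := Finset.sum_nonneg fun a _ => mul_nonneg (hq0 a) (hmv0 a)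
  -- rewrite RHS
  have hRHS : ∑ b, (if b ∈ Astar then Q / (V + xmax) else -(P / V)) * (q b * mv b)
      = Q / (V + xmax) * SA - P / V * SB := by
    rw [← Finset.sum_add_sum_compl Astar]
    have hA1 : ∑ b ∈ Astar, (if b ∈ Astar then Q / (V + xmax) else -(P / V)) * (q b * mv b)
        = Q / (V + xmax) * SA := by
      rw [hSA, Finset.mul_sum]
      exact Finset.sum_congr rfl fun b hb => by rw [if_pos hb]
    have hA2 : ∑ b ∈ Astarᶜ, (if b ∈ Astar then Q / (V + xmax) else -(P / V)) * (q b * mv b)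
        = -(P / V * SB) := by
      rw [hSB, Finset.mul_sum, ← Finset.sum_neg_distrib]
      exact Finset.sum_congr rfl fun b hb => by
        rw [if_neg (Finset.mem_compl.mp hb)]; ring
    rw [hA1, hA2]; ring
  -- the pairing bound
  have hpair : ε * (P * Q) ≤ Q * SA - P * SB := by
    have e1 : Q * SA = ∑ a ∈ Astar, ∑ b ∈ Astarᶜ, q a * mv a * q b := by
      rw [hQeq, hSA, mul_comm, Finset.sum_mul_sum]
    have e2 : P * SB = ∑ a ∈ Astar, ∑ b ∈ Astarᶜ, q a * (q b * mv b) := by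
      rw [hP, hSB, Finset.sum_mul_sum]
    have e3 : ε * (P * Q) = ∑ a ∈ Astar, ∑ b ∈ Astarᶜ, ε * (q a * q b) := by
      rw [hP, hQeq, Finset.sum_mul_sum, Finset.mul_sum]
      exact Finset.sum_congr rfl fun a _ => by rw [Finset.mul_sum]
    rw [e1, e2, ← Finset.sum_sub_distrib, e3]
    refine Finset.sum_le_sum fun a ha => ?_
    rw [← Finset.sum_sub_distrib]
    refine Finset.sum_le_sum fun b hb => ?_
    have hg := hgap a ha b (Finset.mem_compl.mp hb)
    have hqq : 0 ≤ q a * q b := mul_nonneg (hq0 a) (hq0 b)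
    nlinarith
  have hSBQ : SB ≤ xmax * Q := by
    rw [hQeq, Finset.mul_sum, hSB]
    exact Finset.sum_le_sum fun b _ => by nlinarith [hq0 b, hmv1 b, hmv0 b]
  -- divisions
  have t2 : ε * (P * Q) / (V + xmax) ≤ Q / (V + xmax) * SA - P / (V + xmax) * SB := by
    have h := (div_le_div_iff_of_pos_right hD).mpr hpair
    calc ε * (P * Q) / (V + xmax) ≤ (Q * SA - P * SB) / (V + xmax) := h
      _ = Q / (V + xmax) * SA - P / (V + xmax) * SB := by ring
  have t1 : P / V * SB - P / (V + xmax) * SB ≤ P * Q * xmax ^ 2 / (V * (V + xmax)) := by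
    have hid : P / V * SB - P / (V + xmax) * SB = P * SB * xmax / (V * (V + xmax)) := by
      field_simp
      ring
    rw [hid]
    refine (div_le_div_iff_of_pos_right (by positivity)).mpr ?_
    nlinarith [mul_le_mul_of_nonneg_left hSBQ (mul_nonneg hP0 hxmax.le), hP0, hxmax, hSB0]
  have hhalf : xmax ^ 2 / V ≤ ε / 2 := by
    rw [div_le_div_iff₀ hV0 (by norm_num : (0:ℝ) < 2)]
    rw [div_lt_iff₀ hε] at hV1
    nlinarith
  have t3 : P * Q * xmax ^ 2 / (V * (V + xmax)) ≤ ε / 2 * (P * Q) / (V + xmax) := by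
    have hid : P * Q * xmax ^ 2 / (V * (V + xmax)) = (P * Q / (V + xmax)) * (xmax ^ 2 / V) := by
      field_simp
    have hid2 : ε / 2 * (P * Q) / (V + xmax) = (P * Q / (V + xmax)) * (ε / 2) := by ring
    rw [hid, hid2]
    exact mul_le_mul_of_nonneg_left hhalf (by positivity)
  have t4 : ε / (2 * Vcap) * (P * Q) ≤ ε / 2 * (P * Q) / (V + xmax) - P * Q * xmax ^ 2 / (V * (V + xmax)) + P * Q * xmax ^ 2 / (V * (V + xmax)) := by
    have h5 : ε / (2 * Vcap) * (P * Q) ≤ ε / 2 * (P * Q) / (V + xmax) := by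
      have hid : ε / (2 * Vcap) * (P * Q) = (ε / 2 * (P * Q)) * (1 / Vcap) := by
        ring
      have hid2 : ε / 2 * (P * Q) / (V + xmax) = (ε / 2 * (P * Q)) * (1 / (V + xmax)) := by
        ring
      rw [hid, hid2]
      exact mul_le_mul_of_nonneg_left (one_div_le_one_div_of_le hD hVcap) (by positivity)
    linarith
  rw [hRHS]
  have hfin : ε / 2 * (P * Q) / (V + xmax) ≤ ε * (P * Q) / (V + xmax) - P * Q * xmax ^ 2 / (V * (V + xmax)) := by
    have := t3
    have hsplit : ε * (P * Q) / (V + xmax) = ε / 2 * (P * Q) / (V + xmax) + ε / 2 * (P * Q) / (V + xmax) := by ring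
    linarith
  linarith [t1, t2, t3, t4]

set_option maxHeartbeats 2000000 in
/-- Hazard-rate bound for the Roth–Erev learning process: if the conditional expected
payoff gap between actions in the nonempty proper subset `A*` and the other actions is at
least a constant `ε > 0`, and the initial total attraction satisfies
`V₀ > max(2x_max²/ε, x_max)`, then the probability `P_t = Σ_{a∈A*} f_{a,t}/V_t` of
choosing an optimal action satisfies, for every `t`,
`E_t[P_{t+1}] − P_t ≥ (ε/(2(V₀ + (t+1)x_max)))·P_t·(1 − P_t)` almost surely. -/
theorem stmt16 {Ω : Type*} {mΩ : MeasurableSpace Ω} [StandardBorelSpace Ω] [Nonempty Ω]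
    {μ : Measure Ω} [IsProbabilityMeasure μ] (𝓕 : Filtration ℕ mΩ)
    {A : Type*} [Fintype A] [DecidableEq A] [MeasurableSpace A] [DiscreteMeasurableSpace A]
    (xmin xmax : ℝ) (hxmin : 0 ≤ xmin) (hx : xmin < xmax)
    (ε : ℝ) (hε : 0 < ε)
    (Astar : Finset A) (hAstar_ne : Astar.Nonempty) (hAstar_proper : Astar ≠ Finset.univ)
    (f : ℕ → A → Ω → ℝ)
    (hf_meas : ∀ (t : ℕ) (a : A), StronglyMeasurable[𝓕 t] (f t a))
    (hf0_pos : ∀ a : A, ∀ᵐ ω ∂μ, 0 < f 0 a ω)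
    (x : ℕ → A → Ω → ℝ)
    (hx_meas : ∀ (t : ℕ) (a : A), StronglyMeasurable[𝓕 (t + 1)] (x (t + 1) a))
    (hx_mem : ∀ (t : ℕ) (a : A), ∀ᵐ ω ∂μ, x (t + 1) a ω ∈ Set.Icc xmin xmax)
    (hx_int : ∀ (t : ℕ) (a : A), Integrable (x (t + 1) a) μ)
    (act : ℕ → Ω → A)
    (hact_meas : ∀ t : ℕ, Measurable[𝓕 (t + 1)] (act (t + 1)))
    (hact_law : ∀ (t : ℕ) (b : A),
      μ[(fun ω => if act (t + 1) ω = b then (1 : ℝ) else 0)|𝓕 t]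
        =ᵐ[μ] fun ω => f t b ω / ∑ a, f t a ω)
    (hact_indep : ∀ t : ℕ,
      CondIndepFun (𝓕 t) (𝓕.le t) (act (t + 1)) (fun ω => fun a => x (t + 1) a ω) μ)
    (hrec : ∀ (t : ℕ) (b : A) (ω : Ω),
      f (t + 1) b ω = f t b ω + (if act (t + 1) ω = b then x (t + 1) b ω else 0))
    (hgap : ∀ t : ℕ, ∀ a ∈ Astar, ∀ b ∉ Astar, ∀ᵐ ω ∂μ,
      ε ≤ (μ[fun ω' => x (t + 1) a ω' - x (t + 1) b ω'|𝓕 t]) ω)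
    (hV0 : ∀ᵐ ω ∂μ, max (2 * xmax ^ 2 / ε) xmax < ∑ a, f 0 a ω) :
    ∀ t : ℕ, ∀ᵐ ω ∂μ,
      ε / (2 * ((∑ a, f 0 a ω) + ((t : ℝ) + 1) * xmax))
          * (((∑ a ∈ Astar, f t a ω) / ∑ a, f t a ω)
              * (1 - (∑ a ∈ Astar, f t a ω) / ∑ a, f t a ω))
        ≤ (μ[fun ω' => (∑ a ∈ Astar, f (t + 1) a ω') / ∑ a, f (t + 1) a ω'|𝓕 t]) ω
          - (∑ a ∈ Astar, f t a ω) / ∑ a, f t a ω := by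
  have hxmax0 : 0 < xmax := lt_of_le_of_lt hxmin hx
  -- positivity of attractions, monotonicity and bounds of total attraction
  have hfpos : ∀ s : ℕ, ∀ᵐ ω ∂μ, ∀ a, 0 < f s a ω := by
    intro s
    induction s with
    | zero => exact ae_all_iff.2 hf0_pos
    | succ n ih =>
      filter_upwards [ih, ae_all_iff.2 fun a => hx_mem n a] with ω h1 h2 a
      rw [hrec n a ω]
      have h3 : (0:ℝ) ≤ if act (n+1) ω = a then x (n+1) a ω else 0 := by
        split_ifs with h
        · exact le_trans hxmin (h2 a).1
        · exact le_refl 0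
      linarith [h1 a]
  have hstep : ∀ s : ℕ, ∀ᵐ ω ∂μ, ∀ a, f s a ω ≤ f (s+1) a ω := by
    intro s
    filter_upwards [ae_all_iff.2 fun a => hx_mem s a] with ω h2 a
    rw [hrec s a ω]
    have h3 : (0:ℝ) ≤ if act (s+1) ω = a then x (s+1) a ω else 0 := by
      split_ifs with h
      · exact le_trans hxmin (h2 a).1
      · exact le_refl 0
    linarith
  have hVlb : ∀ s : ℕ, ∀ᵐ ω ∂μ, (∑ a, f 0 a ω) ≤ ∑ a, f s a ω := by
    intro s
    induction s with
    | zero => exact Eventually.of_forall fun ω => le_refl _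
    | succ n ih =>
      filter_upwards [ih, hstep n] with ω h1 h2
      exact h1.trans (Finset.sum_le_sum fun a _ => h2 a)
  have hVub : ∀ s : ℕ, ∀ᵐ ω ∂μ, (∑ a, f s a ω) ≤ (∑ a, f 0 a ω) + (s:ℝ) * xmax := by
    intro s
    induction s with
    | zero => exact Eventually.of_forall fun ω => by simp
    | succ n ih =>
      filter_upwards [ih, ae_all_iff.2 fun a => hx_mem n a] with ω h1 h2
      have hsum : ∑ a, f (n+1) a ω
          = (∑ a, f n a ω) + ∑ a, (if act (n+1) ω = a then x (n+1) a ω else 0) := by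
        rw [← Finset.sum_add_distrib]
        exact Finset.sum_congr rfl fun a _ => hrec n a ω
      have hite : ∑ a, (if act (n+1) ω = a then x (n+1) a ω else 0)
          = x (n+1) (act (n+1) ω) ω := by
        rw [Finset.sum_ite_eq]
        simp
      rw [hsum, hite]
      have := (h2 (act (n+1) ω)).2
      push_cast
      linarith
  intro t
  have hm : 𝓕 t ≤ mΩ := 𝓕.le t
  have hsig : SigmaFinite (μ.trim hm) := by
    have : IsFiniteMeasure (μ.trim hm) := isFiniteMeasure_trim hm
    infer_instance
  -- notation
  set V0 : Ω → ℝ := fun ω => ∑ a, f 0 a ω with hV0def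
  set S : Ω → ℝ := fun ω => ∑ a ∈ Astar, f t a ω with hSdef
  set V : Ω → ℝ := fun ω => ∑ a, f t a ω with hVdef
  set P : Ω → ℝ := fun ω => S ω / V ω with hPdef
  set P' : Ω → ℝ := fun ω => (∑ a ∈ Astar, f (t+1) a ω) / ∑ a, f (t+1) a ω with hP'def
  set X : A → Ω → ℝ := fun b ω => x (t+1) b ω with hXdef
  set χ : A → Ω → ℝ := fun b ω => if act (t+1) ω = b then (1:ℝ) else 0 with hχdef
  set hb : A → Ω → ℝ :=
    fun b ω => (S ω + (if b ∈ Astar then X b ω else 0)) / (V ω + X b ω) with hhbdef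
  set T : A → Ω → ℝ := fun b ω => χ b ω * (hb b ω - P ω) with hTdef
  set g : A → Ω → ℝ :=
    fun b ω => if b ∈ Astar then (1 - P ω) / (V ω + xmax) else -(P ω / V ω) with hgdef
  set L : A → Ω → ℝ := fun b ω => g b ω * (χ b ω * X b ω) with hLdef
  set mb : A → Ω → ℝ := fun b => μ[X b|𝓕 t] with hmbdef
  -- measurability
  have hSsm : StronglyMeasurable[𝓕 t] S :=
    (Finset.measurable_sum Astar fun a _ => (hf_meas t a).measurable).stronglyMeasurable
  have hVsm : StronglyMeasurable[𝓕 t] V :=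
    (Finset.measurable_sum Finset.univ fun a _ => (hf_meas t a).measurable).stronglyMeasurable
  have hPsm : StronglyMeasurable[𝓕 t] P := (hSsm.measurable.div hVsm.measurable).stronglyMeasurable
  have hSm : Measurable S := (hSsm.mono hm).measurable
  have hVm : Measurable V := (hVsm.mono hm).measurable
  have hPm : Measurable P := (hPsm.mono hm).measurable
  have hP'm : Measurable P' := by
    refine Measurable.div ?_ ?_
    · exact Finset.measurable_sum Astar fun a _ =>
        ((hf_meas (t+1) a).mono (𝓕.le (t+1))).measurable
    · exact Finset.measurable_sum Finset.univ fun a _ =>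
        ((hf_meas (t+1) a).mono (𝓕.le (t+1))).measurable
  have hactm : Measurable (act (t+1)) := (hact_meas t).mono (𝓕.le (t+1)) le_rfl
  have hXm : ∀ b, Measurable (X b) := fun b => ((hx_meas t b).mono (𝓕.le (t+1))).measurable
  have hχm : ∀ b, Measurable (χ b) := fun b =>
    Measurable.ite (hactm (MeasurableSet.singleton b)) measurable_const measurable_const
  have hhbm : ∀ b, Measurable (hb b) := by
    intro b
    by_cases hbA : b ∈ Astar
    · simp only [hhbdef, if_pos hbA]
      exact (hSm.add (hXm b)).div (hVm.add (hXm b))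
    · simp only [hhbdef, if_neg hbA]
      exact (hSm.add measurable_const).div (hVm.add (hXm b))
  have hTm : ∀ b, Measurable (T b) := fun b => (hχm b).mul ((hhbm b).sub hPm)
  have hgsm : ∀ b, StronglyMeasurable[𝓕 t] (g b) := by
    intro b
    by_cases hbA : b ∈ Astar
    · simp only [hgdef, if_pos hbA]
      exact ((measurable_const.sub hPsm.measurable).div
        (hVsm.measurable.add measurable_const)).stronglyMeasurable
    · simp only [hgdef, if_neg hbA]
      exact ((hPsm.measurable.div hVsm.measurable).neg).stronglyMeasurable
  have hgm : ∀ b, Measurable (g b) := fun b => ((hgsm b).mono hm).measurable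
  -- almost-everywhere numeric facts
  have hfacts : ∀ᵐ ω ∂μ,
      (0 < S ω) ∧ (0 < V ω) ∧ (S ω ≤ V ω) ∧ (xmax < V ω) ∧ (2*xmax^2/ε < V ω) ∧
      (V ω + xmax ≤ V0 ω + ((t:ℝ)+1)*xmax) ∧ (∀ b, 0 ≤ X b ω ∧ X b ω ≤ xmax) ∧
      (0 < ∑ a ∈ Astar, f (t+1) a ω) ∧
      (∑ a ∈ Astar, f (t+1) a ω ≤ ∑ a, f (t+1) a ω) ∧ (0 < ∑ a, f (t+1) a ω) := by
    filter_upwards [hfpos t, hfpos (t+1), ae_all_iff.2 fun b => hx_mem t b, hV0, hVlb t,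
      hVub t] with ω h1 h1' h2 h3 h4 h5
    obtain ⟨a0, ha0⟩ := hAstar_ne
    have hSpos : 0 < S ω := Finset.sum_pos (fun a _ => h1 a) ⟨a0, ha0⟩
    have hVpos : 0 < V ω := Finset.sum_pos (fun a _ => h1 a) ⟨a0, Finset.mem_univ a0⟩
    have hSV : S ω ≤ V ω := Finset.sum_le_sum_of_subset_of_nonneg
      (Finset.subset_univ _) (fun a _ _ => (h1 a).le)
    have hxV : xmax < V ω := lt_of_lt_of_le (lt_of_le_of_lt (le_max_right _ _) h3) h4
    have h2xV : 2*xmax^2/ε < V ω := lt_of_lt_of_le (lt_of_le_of_lt (le_max_left _ _) h3) h4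
    have hcap : V ω + xmax ≤ V0 ω + ((t:ℝ)+1)*xmax := by
      have : V ω ≤ V0 ω + (t:ℝ)*xmax := h5
      linarith [this]
    have hXb : ∀ b, 0 ≤ X b ω ∧ X b ω ≤ xmax :=
      fun b => ⟨le_trans hxmin (h2 b).1, (h2 b).2⟩
    have hS' : 0 < ∑ a ∈ Astar, f (t+1) a ω := Finset.sum_pos (fun a _ => h1' a) ⟨a0, ha0⟩
    have hSV' : ∑ a ∈ Astar, f (t+1) a ω ≤ ∑ a, f (t+1) a ω :=
      Finset.sum_le_sum_of_subset_of_nonneg (Finset.subset_univ _) (fun a _ _ => (h1' a).le)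
    have hV' : 0 < ∑ a, f (t+1) a ω := Finset.sum_pos (fun a _ => h1' a) ⟨a0, Finset.mem_univ a0⟩
    exact ⟨hSpos, hVpos, hSV, hxV, h2xV, hcap, hXb, hS', hSV', hV'⟩
  -- conditional means of the payoffs
  have hmb_bounds : ∀ᵐ ω ∂μ, ∀ b, 0 ≤ mb b ω ∧ mb b ω ≤ xmax := by
    refine ae_all_iff.2 fun b => ?_
    have hlow := condExp_mono (μ := μ) (m := 𝓕 t) (integrable_const xmin) (hx_int t b)
      ((hx_mem t b).mono fun ω h => h.1)
    have hup := condExp_mono (μ := μ) (m := 𝓕 t) (hx_int t b) (integrable_const xmax)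
      ((hx_mem t b).mono fun ω h => h.2)
    rw [condExp_const hm] at hlow hup
    filter_upwards [hlow, hup] with ω hl hu
    exact ⟨le_trans hxmin hl, hu⟩
  have hmb_gap : ∀ᵐ ω ∂μ, ∀ a b : A, a ∈ Astar → b ∉ Astar → ε ≤ mb a ω - mb b ω := by
    refine ae_all_iff.2 fun a => ae_all_iff.2 fun b => ?_
    by_cases ha : a ∈ Astar
    · by_cases hbm : b ∈ Astar
      · exact Eventually.of_forall fun ω _ h2 => absurd hbm h2
      · have hsub : μ[x (t+1) a - x (t+1) b|𝓕 t]
            =ᵐ[μ] μ[x (t+1) a|𝓕 t] - μ[x (t+1) b|𝓕 t] :=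
          condExp_sub (hx_int t a) (hx_int t b) (𝓕 t)
        have heq : (fun ω' => x (t+1) a ω' - x (t+1) b ω') = x (t+1) a - x (t+1) b := rfl
        filter_upwards [hgap t a ha b hbm, hsub] with ω hg hs _ _
        rw [heq] at hg
        rw [hs] at hg
        exact hg
    · exact Eventually.of_forall fun ω h1 => absurd h1 ha
  -- integrability
  have hP'bd : ∀ᵐ ω ∂μ, ‖P' ω‖ ≤ 1 := by
    filter_upwards [hfacts] with ω hfa
    obtain ⟨_, _, _, _, _, _, _, hS', hSV', hV'⟩ := hfa
    rw [hP'def, Real.norm_eq_abs, abs_le]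
    constructor
    · have : 0 ≤ (∑ a ∈ Astar, f (t+1) a ω) / ∑ a, f (t+1) a ω :=
        div_nonneg hS'.le hV'.le
      linarith
    · rw [div_le_one hV']
      exact hSV'
  have hP'int : Integrable P' μ :=
    Integrable.mono' (integrable_const 1) hP'm.aestronglyMeasurable hP'bd
  have hPbd : ∀ᵐ ω ∂μ, 0 ≤ P ω ∧ P ω ≤ 1 := by
    filter_upwards [hfacts] with ω hfa
    obtain ⟨hS0, hV0', hSV, _⟩ := hfa
    exact ⟨div_nonneg hS0.le hV0'.le, by rw [hPdef, div_le_one hV0']; exact hSV⟩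
  have hPint : Integrable P μ := by
    refine Integrable.mono' (integrable_const 1) hPm.aestronglyMeasurable ?_
    filter_upwards [hPbd] with ω h
    rw [Real.norm_eq_abs, abs_le]; exact ⟨by linarith [h.1], h.2⟩
  have hhb_bd : ∀ᵐ ω ∂μ, ∀ b, 0 ≤ hb b ω ∧ hb b ω ≤ 1 := by
    filter_upwards [hfacts] with ω hfa b
    obtain ⟨hS0, hV0', hSV, _, _, _, hXb, _⟩ := hfa
    have hX0 := (hXb b).1
    have hden : 0 < V ω + X b ω := by linarith
    have hnum0 : 0 ≤ S ω + (if b ∈ Astar then X b ω else 0) := by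
      split_ifs with hbA
      · linarith
      · linarith
    have hnum1 : S ω + (if b ∈ Astar then X b ω else 0) ≤ V ω + X b ω := by
      split_ifs with hbA
      · linarith
      · linarith
    exact ⟨div_nonneg hnum0 hden.le, by rw [hhbdef, div_le_one hden]; exact hnum1⟩
  have hTbd : ∀ b, ∀ᵐ ω ∂μ, ‖T b ω‖ ≤ 1 := by
    intro b
    filter_upwards [hhb_bd, hPbd] with ω hhb hP
    obtain ⟨h1, h2⟩ := hhb b
    rw [hTdef, Real.norm_eq_abs]
    by_cases hab : act (t+1) ω = b
    · simp only [hχdef, if_pos hab, one_mul]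
      rw [abs_le]
      constructor <;> [linarith [hP.2]; linarith [hP.1]]
    · simp [hχdef, if_neg hab]
  have hTint : ∀ b, Integrable (T b) μ := fun b =>
    Integrable.mono' (integrable_const 1) (hTm b).aestronglyMeasurable (hTbd b)
  have hχXint : ∀ b, Integrable (fun ω => χ b ω * X b ω) μ := by
    intro b
    refine Integrable.bdd_mul (c := 1) (hx_int t b) (hχm b).aestronglyMeasurable ?_
    refine Eventually.of_forall fun ω => ?_
    simp only [hχdef]
    split_ifs <;> simp
  have hgbd : ∀ b, ∀ᵐ ω ∂μ, ‖g b ω‖ ≤ 1/xmax := by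
    intro b
    filter_upwards [hfacts, hPbd] with ω hfa hP
    obtain ⟨hS0, hV0', hSV, hxV, _⟩ := hfa
    simp only [hgdef, Real.norm_eq_abs]
    split_ifs with hbA
    · rw [abs_of_nonneg (div_nonneg (by linarith [hP.2]) (by linarith))]
      rw [div_le_div_iff₀ (by linarith) hxmax0]
      nlinarith [hP.1, hP.2]
    · rw [abs_neg, abs_of_nonneg (div_nonneg hP.1 hV0'.le)]
      rw [div_le_div_iff₀ hV0' hxmax0]
      nlinarith [hP.1, hP.2, hxV]
  have hLint : ∀ b, Integrable (L b) μ := fun b =>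
    Integrable.bdd_mul (c := 1/xmax) (hχXint b) (hgm b).aestronglyMeasurable (hgbd b)
  -- pointwise decomposition
  have hdec : ∀ᵐ ω ∂μ, P' ω = P ω + ∑ b, T b ω := by
    filter_upwards [hfacts] with ω hfa
    have hsumT : ∑ b, T b ω = hb (act (t+1) ω) ω - P ω := by
      have hterm : ∀ b, T b ω = if act (t+1) ω = b then hb b ω - P ω else 0 := by
        intro b
        by_cases hab : act (t+1) ω = b
        · simp [hTdef, hχdef, hab]
        · simp [hTdef, hχdef, hab]
      rw [Finset.sum_congr rfl fun b _ => hterm b, Finset.sum_ite_eq]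
      simp
    have hS'eq : (∑ a ∈ Astar, f (t+1) a ω)
        = S ω + (if act (t+1) ω ∈ Astar then X (act (t+1) ω) ω else 0) := by
      rw [Finset.sum_congr rfl fun a (_ : a ∈ Astar) => hrec t a ω]
      rw [Finset.sum_add_distrib, Finset.sum_ite_eq]
    have hV'eq : (∑ a, f (t+1) a ω) = V ω + X (act (t+1) ω) ω := by
      rw [Finset.sum_congr rfl fun a (_ : a ∈ Finset.univ) => hrec t a ω]
      rw [Finset.sum_add_distrib, Finset.sum_ite_eq]
      simp [hVdef, hXdef]
    have hP'eq : P' ω = hb (act (t+1) ω) ω := by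
      rw [hP'def]
      simp only [hS'eq, hV'eq, hhbdef]
    rw [hP'eq, hsumT]
    ring
  -- L ≤ T pointwise
  have hLT : ∀ b, L b ≤ᵐ[μ] T b := by
    intro b
    filter_upwards [hfacts, hPbd] with ω hfa hP
    obtain ⟨hS0, hV0', hSV, hxV, _, _, hXb, _⟩ := hfa
    have hX0 := (hXb b).1
    have hX1 := (hXb b).2
    have hVX : 0 < V ω + X b ω := by linarith
    have hVxm : 0 < V ω + xmax := by linarith
    by_cases hab : act (t+1) ω = b
    · simp only [hLdef, hTdef, hχdef, if_pos hab, one_mul, mul_one]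
      by_cases hbA : b ∈ Astar
      · simp only [hgdef, hhbdef, if_pos hbA]
        have hkey1 : (S ω + X b ω) / (V ω + X b ω) - P ω
            = X b ω * (V ω - S ω) / (V ω * (V ω + X b ω)) := by
          rw [hPdef]
          field_simp
          ring
        have hkey2 : (1 - P ω) / (V ω + xmax) * X b ω
            = X b ω * (V ω - S ω) / (V ω * (V ω + xmax)) := by
          rw [hPdef]
          field_simp
        rw [hkey1, hkey2]
        rw [div_eq_mul_one_div (X b ω * (V ω - S ω)) (V ω * (V ω + xmax)),
          div_eq_mul_one_div (X b ω * (V ω - S ω)) (V ω * (V ω + X b ω))]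
        refine mul_le_mul_of_nonneg_left ?_ (by nlinarith)
        refine one_div_le_one_div_of_le (by positivity) ?_
        nlinarith
      · simp only [hgdef, hhbdef, if_neg hbA]
        have hkey1 : (S ω + 0) / (V ω + X b ω) - P ω
            = -(X b ω * S ω / (V ω * (V ω + X b ω))) := by
          rw [hPdef]
          field_simp
          ring
        have hkey2 : -(P ω / V ω) * X b ω = -(X b ω * S ω / (V ω * V ω)) := by
          rw [hPdef]
          field_simp
        rw [hkey1, hkey2, neg_le_neg_iff]
        rw [div_eq_mul_one_div (X b ω * S ω) (V ω * V ω),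
          div_eq_mul_one_div (X b ω * S ω) (V ω * (V ω + X b ω))]
        refine mul_le_mul_of_nonneg_left ?_ (by nlinarith)
        refine one_div_le_one_div_of_le (by positivity) ?_
        nlinarith
    · simp [hLdef, hTdef, hχdef, hab]
  -- conditional expectation of the decomposition
  have hTsum_int : Integrable (fun ω => ∑ b, T b ω) μ :=
    integrable_finset_sum Finset.univ fun b _ => hTint b
  have hsum_fun : (fun ω => ∑ b, T b ω) = ∑ b, T b := by
    funext ω
    simp
  have hcond1 : μ[P'|𝓕 t] =ᵐ[μ] fun ω => P ω + ∑ b, (μ[T b|𝓕 t]) ω := by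
    have h1 : μ[P'|𝓕 t] =ᵐ[μ] μ[fun ω => P ω + ∑ b, T b ω|𝓕 t] := condExp_congr_ae hdec
    have h2 : μ[fun ω => P ω + ∑ b, T b ω|𝓕 t] =ᵐ[μ] μ[P|𝓕 t] + μ[fun ω => ∑ b, T b ω|𝓕 t] :=
      condExp_add hPint hTsum_int (𝓕 t)
    have h3 : μ[P|𝓕 t] = P := condExp_of_stronglyMeasurable hm hPsm hPint
    have h4 : μ[fun ω => ∑ b, T b ω|𝓕 t] =ᵐ[μ] ∑ b, μ[T b|𝓕 t] := by
      rw [hsum_fun]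
      exact condExp_finset_sum (fun b _ => hTint b) (𝓕 t)
    filter_upwards [h1, h2, h4] with ω e1 e2 e4
    rw [e1, e2, Pi.add_apply, h3, e4, Finset.sum_apply]
  -- comparison of conditional expectations
  have hcomp : ∀ b, μ[L b|𝓕 t] ≤ᵐ[μ] μ[T b|𝓕 t] := fun b =>
    condExp_mono (hLint b) (hTint b) (hLT b)
  -- pull-out of the 𝓕 t-measurable factor
  have hLeq : ∀ b, μ[L b|𝓕 t] =ᵐ[μ] fun ω => g b ω * (μ[fun ω' => χ b ω' * X b ω'|𝓕 t]) ω := by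
    intro b
    have hLfun : L b = g b * fun ω' => χ b ω' * X b ω' := by
      funext ω
      simp [hLdef]
    rw [hLfun]
    exact condExp_stronglyMeasurable_mul_of_bound hm (hgsm b) (hχXint b) (1/xmax) (hgbd b)
  -- factorization via conditional independence
  have hGm : Measurable (fun ω => fun a => x (t+1) a ω) :=
    measurable_pi_lambda _ fun a => hXm a
  have hfact : ∀ b, μ[fun ω => χ b ω * X b ω|𝓕 t]
      =ᵐ[μ] fun ω => (f t b ω / V ω) * mb b ω := by
    intro b
    have hL1 := condexp_indicator_mul_of_condIndepFun hm hactm hGm (hact_indep t)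
      (MeasurableSet.singleton b) (measurable_pi_apply b) (hx_int t b)
    have hA1 : μ[fun ω => χ b ω * X b ω|𝓕 t]
        =ᵐ[μ] μ[fun ω => (act (t+1) ⁻¹' {b}).indicator (fun _ => (1:ℝ)) ω
            * (fun v : A → ℝ => v b) ((fun ω' => fun a => x (t+1) a ω') ω)|𝓕 t] := by
      refine condExp_congr_ae (Eventually.of_forall fun ω => ?_)
      by_cases hab : act (t+1) ω = b
      · simp [hχdef, hXdef, Set.indicator_apply, hab]
      · simp [hχdef, hXdef, Set.indicator_apply, hab]
    have hA2 : μ[(act (t+1) ⁻¹' {b}).indicator (fun _ => (1:ℝ))|𝓕 t]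
        =ᵐ[μ] fun ω => f t b ω / V ω := by
      refine EventuallyEq.trans (condExp_congr_ae (Eventually.of_forall fun ω => ?_))
        (hact_law t b)
      by_cases hab : act (t+1) ω = b
      · simp [Set.indicator_apply, hab]
      · simp [Set.indicator_apply, hab]
    have hA3 : μ[fun ω => (fun v : A → ℝ => v b) ((fun ω' => fun a => x (t+1) a ω') ω)|𝓕 t]
        = mb b := rfl
    filter_upwards [hA1, hL1, hA2] with ω e1 e2 e3
    rw [e1, e2, Pi.mul_apply, e3, hA3]
  -- per-action chain
  have hchain : ∀ᵐ ω ∂μ, ∀ b, g b ω * ((f t b ω / V ω) * mb b ω) ≤ (μ[T b|𝓕 t]) ω := by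
    refine ae_all_iff.2 fun b => ?_
    filter_upwards [hcomp b, hLeq b, hfact b] with ω h1 h2 h3
    calc g b ω * ((f t b ω / V ω) * mb b ω) = g b ω * (μ[fun ω' => χ b ω' * X b ω'|𝓕 t]) ω := by
          rw [h3]
      _ = (μ[L b|𝓕 t]) ω := h2.symm
      _ ≤ (μ[T b|𝓕 t]) ω := h1
  -- final assembly
  filter_upwards [hcond1, hfacts, hmb_bounds, hmb_gap, hchain, hfpos t]
    with ω hc hfa hmbb hmbg hch hfp
  obtain ⟨hS0, hV0', hSV, hxV, h2xV, hcap, hXb, _⟩ := hfa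
  have hkey := key_ineq Astar (fun b => f t b ω / V ω) (fun b => mb b ω) ε xmax (V ω)
      (V0 ω + ((t:ℝ)+1)*xmax)
      (fun b => div_nonneg (hfp b).le hV0'.le)
      (by rw [← Finset.sum_div]; exact div_self (ne_of_gt hV0'))
      (fun b => (hmbb b).1) (fun b => (hmbb b).2)
      (fun a ha b hbm => hmbg a b ha hbm) hε hxmax0 h2xV hxV hcap
  have hq : ∑ a ∈ Astar, f t a ω / V ω = P ω := by
    simp only [hPdef, hSdef, Finset.sum_div]
  simp only [hq] at hkey
  have hS2 : ∑ b, g b ω * ((f t b ω / V ω) * mb b ω) ≤ ∑ b, (μ[T b|𝓕 t]) ω :=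
    Finset.sum_le_sum fun b _ => hch b
  simp only [hgdef] at hS2
  simp only [hV0def, hPdef, hSdef, hVdef] at hkey hS2 hc ⊢
  linarith [hkey, hS2, hc]
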